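/- For every integer r ≥ 2, the following identity holds in ℋ: ∇(a b^{r−1}) = (−1)^{r+1} · 3 · a^{r} + Σ_{j=1}^{r−2} (−1)^{j+1} a^{j}(b−a)^{r−j}, where juxtaposition and powers denote concatenation (so a^{j} is the j-fold concatenation of a, and (b−a)^{m} is the m-fold concatenation power of b−a expanded multilinearly into a signed sum of words). -/

import Mathlib

inductive Letter | a | b
deriving DecidableEq

abbrev Word := List Letter

/-- The algebra `ℋ`: formal `ℚ`-linear combinations of words. -/
abbrev H := Word →₀ ℚ

/-- The list of shuffles of two words (with multiplicity). -/
def shuffleList : Word → Word → List Word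
  | [], v => [v]
  | u, [] => [u]
  | x :: u, y :: v =>
      ((shuffleList u (y :: v)).map fun t => x :: t) ++
      ((shuffleList (x :: u) v).map fun t => y :: t)
termination_by u v => u.length + v.length
decreasing_by all_goals simp

/-- The shuffle product `u * v` of two words, as an element of `ℋ`. -/
noncomputable def shW (u v : Word) : H :=
  ((shuffleList u v).map fun t => Finsupp.single t (1 : ℚ)).sum

/-- The shuffle product of a word with an element of `ℋ`, extended linearly. -/
noncomputable def shWH (u : Word) (g : H) : H := g.sum fun v cv => cv • shW u v

/-- Concatenation of a word with an element of `ℋ`, extended linearly. -/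
noncomputable def concatWH (u : Word) (g : H) : H :=
  g.sum fun v c => Finsupp.single (u ++ v) c

/-- The list of all words of length `m`. -/
def wordsOfLength : ℕ → List Word
  | 0 => [[]]
  | n + 1 =>
      ((wordsOfLength n).map fun t => Letter.a :: t) ++
      ((wordsOfLength n).map fun t => Letter.b :: t)

/-- `(a+b)^m`, the `m`-fold concatenation power of `a+b` expanded multilinearly:
the sum of all words of length `m`. -/
noncomputable def abPow (m : ℕ) : H :=
  ((wordsOfLength m).map fun t => Finsupp.single t (1 : ℚ)).sum

/-- `(b-a)^m`, the `m`-fold concatenation power of `b-a` expanded multilinearly: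
the signed sum of all words of length `m`. -/
noncomputable def bmaPow (m : ℕ) : H :=
  ((wordsOfLength m).map fun t =>
    Finsupp.single t ((-1 : ℚ) ^ t.count Letter.a)).sum

/-- Concatenation product on `ℋ`, extended bilinearly from words. -/
noncomputable def concatH (f g : H) : H :=
  f.sum fun u cu => g.sum fun v cv => Finsupp.single (u ++ v) (cu * cv)

/-- `τ(a) = a + b`, `τ(b) = -a`, as elements of `ℋ`. -/
noncomputable def tauL : Letter → H
  | .a => Finsupp.single [Letter.a] 1 + Finsupp.single [Letter.b] 1
  | .b => - Finsupp.single [Letter.a] 1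

/-- `τ(c₁⋯c_n) = τ(c_n)⋯τ(c₁)`, expanded multilinearly with respect to concatenation. -/
noncomputable def tauH : Word → H
  | [] => Finsupp.single [] 1
  | c :: w => concatH (tauH w) (tauL c)

/-- The operator `∇` : `∇(c₁⋯c_n) = Σ_{i=0}^{n} (c₁⋯c_i) * τ(c_{i+1}⋯c_n)`. -/
noncomputable def nablaOp (w : Word) : H :=
  ∑ i ∈ Finset.range (w.length + 1), shWH (w.take i) (tauH (w.drop i))

lemma concatWH_eq (u : Word) (g : H) : concatWH u g = Finsupp.mapDomain (u ++ ·) g := rfl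


lemma concatWH_zero (u : Word) : concatWH u (0 : H) = 0 := by
  rw [concatWH_eq, Finsupp.mapDomain_zero]


lemma concatWH_add (u : Word) (g h : H) : concatWH u (g + h) = concatWH u g + concatWH u h := by
  simp [concatWH_eq, Finsupp.mapDomain_add]


lemma concatWH_single (u v : Word) (c : ℚ) :
    concatWH u (Finsupp.single v c) = Finsupp.single (u ++ v) c := by
  rw [concatWH_eq, Finsupp.mapDomain_single]


lemma concatWH_smul (u : Word) (c : ℚ) (g : H) : concatWH u (c • g) = c • concatWH u g := by
  simp [concatWH_eq, Finsupp.mapDomain_smul]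


lemma concatWH_neg (u : Word) (g : H) : concatWH u (-g) = - concatWH u g := by
  have := concatWH_smul u (-1) g
  simpa using this


lemma concatWH_sub (u : Word) (g h : H) : concatWH u (g - h) = concatWH u g - concatWH u h := by
  rw [sub_eq_add_neg, concatWH_add, concatWH_neg, sub_eq_add_neg]


lemma concatWH_sum {ι : Type*} (u : Word) (s : Finset ι) (f : ι → H) :
    concatWH u (∑ i ∈ s, f i) = ∑ i ∈ s, concatWH u (f i) := by
  classical
  induction s using Finset.induction with
  | empty => simp [concatWH_zero]
  | insert _ _ h ih => rw [Finset.sum_insert h, Finset.sum_insert h, concatWH_add, ih]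


lemma concatWH_concatWH (u v : Word) (g : H) :
    concatWH u (concatWH v g) = concatWH (u ++ v) g := by
  simp only [concatWH_eq]
  rw [← Finsupp.mapDomain_comp]
  congr 1
  funext w
  simp [Function.comp, List.append_assoc]


lemma shW_nil_left (v : Word) : shW [] v = Finsupp.single v 1 := by
  simp [shW, shuffleList]


lemma shW_nil_right (u : Word) : shW u [] = Finsupp.single u 1 := by
  cases u <;> simp [shW, shuffleList]


lemma sum_map_cons (x : Letter) (l : List Word) :
    ((l.map fun t => x :: t).map fun t => (Finsupp.single t (1:ℚ) : H)).sum
      = concatWH [x] ((l.map fun t => (Finsupp.single t (1:ℚ) : H)).sum) := by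
  induction l with
  | nil => simp [concatWH_zero]
  | cons hd tl ih =>
      simp only [List.map_cons, List.sum_cons, concatWH_add, concatWH_single, ih,
        List.singleton_append]


lemma shW_cons (x y : Letter) (u v : Word) :
    shW (x :: u) (y :: v) =
      concatWH [x] (shW u (y :: v)) + concatWH [y] (shW (x :: u) v) := by
  rw [shW, shuffleList, List.map_append, List.sum_append, shW, shW, sum_map_cons, sum_map_cons]


lemma shWH_single (u v : Word) (c : ℚ) :
    shWH u (Finsupp.single v c) = c • shW u v := by
  rw [shWH, Finsupp.sum_single_index]
  simp


lemma shWH_nil (g : H) : shWH [] g = g := by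
  rw [shWH]
  conv_rhs => rw [← g.sum_single]
  exact Finsupp.sum_congr fun v hv => by
    rw [shW_nil_left, Finsupp.smul_single, smul_eq_mul, mul_one]


lemma concatH_single_left (u : Word) (c : ℚ) (g : H) :
    concatH (Finsupp.single u c) g = c • concatWH u g := by
  rw [concatH, Finsupp.sum_single_index]
  · rw [concatWH, Finsupp.smul_sum]
    exact Finsupp.sum_congr fun v hv => by rw [Finsupp.smul_single, smul_eq_mul]
  · simp


lemma tauH_repb (k : ℕ) :
    tauH (List.replicate k Letter.b) =
      Finsupp.single (List.replicate k Letter.a) ((-1:ℚ)^k) := by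
  induction k with
  | zero => simp [tauH]
  | succ n ih =>
    rw [List.replicate_succ, tauH, ih, concatH_single_left,
      show tauL Letter.b = - Finsupp.single [Letter.a] 1 from rfl,
      concatWH_neg, concatWH_single, ← List.replicate_succ', smul_neg,
      Finsupp.smul_single, smul_eq_mul, mul_one, pow_succ, mul_neg_one,
      Finsupp.single_neg]


lemma tauH_ab (k : ℕ) :
    tauH (Letter.a :: List.replicate k Letter.b) =
      ((-1:ℚ)^k) • (Finsupp.single (List.replicate (k+1) Letter.a) (1:ℚ)
        + Finsupp.single (List.replicate k Letter.a ++ [Letter.b]) (1:ℚ)) := by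
  rw [tauH, tauH_repb, concatH_single_left]
  congr 1
  rw [show tauL Letter.a = Finsupp.single [Letter.a] 1 + Finsupp.single [Letter.b] 1 from rfl,
    concatWH_add, concatWH_single, concatWH_single, ← List.replicate_succ']


lemma bma_map_cons_a (l : List Word) :
    ((l.map fun t => Letter.a :: t).map fun t =>
        (Finsupp.single t ((-1:ℚ) ^ t.count Letter.a) : H)).sum
      = - concatWH [Letter.a]
          ((l.map fun t => (Finsupp.single t ((-1:ℚ) ^ t.count Letter.a) : H)).sum) := by
  induction l with
  | nil => simp [concatWH_zero]
  | cons hd tl ih =>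
      simp only [List.map_cons, List.sum_cons, concatWH_add, concatWH_single, ih,
        List.singleton_append, List.count_cons_self, pow_succ, mul_neg_one,
        Finsupp.single_neg, neg_add]


lemma bma_map_cons_b (l : List Word) :
    ((l.map fun t => Letter.b :: t).map fun t =>
        (Finsupp.single t ((-1:ℚ) ^ t.count Letter.a) : H)).sum
      = concatWH [Letter.b]
          ((l.map fun t => (Finsupp.single t ((-1:ℚ) ^ t.count Letter.a) : H)).sum) := by
  induction l with
  | nil => simp [concatWH_zero]
  | cons hd tl ih =>
      have hc : (Letter.b :: hd).count Letter.a = hd.count Letter.a := by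
        rw [List.count_cons]
        simp
      simp only [List.map_cons, List.sum_cons, concatWH_add, concatWH_single, ih,
        List.singleton_append, hc]


lemma bmaPow_succ (n : ℕ) :
    bmaPow (n+1) = concatWH [Letter.b] (bmaPow n) - concatWH [Letter.a] (bmaPow n) := by
  rw [bmaPow, wordsOfLength, List.map_append, List.sum_append, bma_map_cons_a, bma_map_cons_b,
    bmaPow]
  abel


lemma bmaPow_zero : bmaPow 0 = Finsupp.single [] 1 := by
  simp [bmaPow, wordsOfLength]


lemma bmaPow_one :
    bmaPow 1 = Finsupp.single [Letter.b] 1 - Finsupp.single [Letter.a] 1 := by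
  rw [show (1:ℕ) = 0 + 1 from rfl, bmaPow_succ, bmaPow_zero, concatWH_single, concatWH_single]
  rfl


noncomputable def PP (n : ℕ) : H :=
  ∑ p ∈ Finset.HasAntidiagonal.antidiagonal n,
    ((-1:ℚ)^p.2) • shW (List.replicate p.1 Letter.b) (List.replicate p.2 Letter.a)


noncomputable def phiP (i : ℕ) : ℕ → H
  | 0 => 0
  | j+1 => ((-1:ℚ)^(j+1)) •
      concatWH [Letter.a] (shW (List.replicate i Letter.b) (List.replicate j Letter.a))


lemma fP_split (i j : ℕ) :
    ((-1:ℚ)^j) • shW (List.replicate (i+1) Letter.b) (List.replicate j Letter.a)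
      = ((-1:ℚ)^j) • concatWH [Letter.b]
          (shW (List.replicate i Letter.b) (List.replicate j Letter.a)) + phiP (i+1) j := by
  cases j with
  | zero =>
      simp [phiP, shW_nil_right, concatWH_single, List.replicate_succ]
  | succ m =>
      show _ = _ + ((-1:ℚ)^(m+1)) • concatWH [Letter.a]
        (shW (List.replicate (i+1) Letter.b) (List.replicate m Letter.a))
      rw [List.replicate_succ (a := Letter.b), List.replicate_succ (a := Letter.a), shW_cons,
        smul_add, ← List.replicate_succ (a := Letter.b), ← List.replicate_succ (a := Letter.a)]


lemma phiP_sum_succ (n : ℕ) :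
    ∑ p ∈ Finset.HasAntidiagonal.antidiagonal (n+1), phiP p.1 p.2 = - concatWH [Letter.a] (PP n) := by
  rw [Finset.Nat.sum_antidiagonal_succ' (f := fun p => phiP p.1 p.2),
    show phiP (n+1) 0 = 0 from rfl, zero_add, PP, concatWH_sum, ← Finset.sum_neg_distrib]
  refine Finset.sum_congr rfl fun p _ => ?_
  show ((-1:ℚ)^(p.2+1)) • concatWH [Letter.a] (shW _ _) = _
  rw [concatWH_smul, pow_succ, mul_neg_one, neg_smul]


lemma phiP_zero_succ (n : ℕ) :
    phiP 0 (n+1) = ((-1:ℚ)^(n+1)) • Finsupp.single (List.replicate (n+1) Letter.a) (1:ℚ) := by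
  show ((-1:ℚ)^(n+1)) • concatWH [Letter.a]
      (shW (List.replicate 0 Letter.b) (List.replicate n Letter.a)) = _
  rw [List.replicate_zero, shW_nil_left, concatWH_single, List.singleton_append,
    ← List.replicate_succ]


lemma PP_succ (n : ℕ) :
    PP (n+1) = concatWH [Letter.b] (PP n) - concatWH [Letter.a] (PP n) := by
  rw [PP, Finset.Nat.sum_antidiagonal_succ
      (f := fun p => ((-1:ℚ)^p.2) • shW (List.replicate p.1 Letter.b) (List.replicate p.2 Letter.a))]
  rw [Finset.sum_congr rfl (fun p (_ : p ∈ Finset.HasAntidiagonal.antidiagonal n) => fP_split p.1 p.2),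
    Finset.sum_add_distrib]
  have h2 : ∑ p ∈ Finset.HasAntidiagonal.antidiagonal n, phiP (p.1+1) p.2
      = - concatWH [Letter.a] (PP n) - phiP 0 (n+1) := by
    have h := Finset.Nat.sum_antidiagonal_succ (n := n) (f := fun p => phiP p.1 p.2)
    rw [phiP_sum_succ] at h
    exact eq_sub_of_add_eq' h.symm
  rw [h2]
  have h3 : ∑ p ∈ Finset.HasAntidiagonal.antidiagonal n,
      ((-1:ℚ)^p.2) • concatWH [Letter.b]
        (shW (List.replicate p.1 Letter.b) (List.replicate p.2 Letter.a))
      = concatWH [Letter.b] (PP n) := by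
    rw [PP, concatWH_sum]
    exact Finset.sum_congr rfl fun p _ => (concatWH_smul _ _ _).symm
  rw [h3, phiP_zero_succ]
  have h4 : ((-1:ℚ)^(n+1)) • shW (List.replicate 0 Letter.b) (List.replicate (n+1) Letter.a)
      = ((-1:ℚ)^(n+1)) • Finsupp.single (List.replicate (n+1) Letter.a) (1:ℚ) := by
    rw [List.replicate_zero, shW_nil_left]
  rw [h4]
  abel


lemma PP_eq (n : ℕ) : PP n = bmaPow n := by
  induction n with
  | zero =>
      rw [PP, Finset.Nat.antidiagonal_zero, Finset.sum_singleton, bmaPow_zero]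
      simp [shW_nil_left]
  | succ m ih => rw [PP_succ, ih, bmaPow_succ]


noncomputable def QQ (n : ℕ) : H :=
  ∑ p ∈ Finset.HasAntidiagonal.antidiagonal n,
    ((-1:ℚ)^p.2) • shW (Letter.a :: List.replicate p.1 Letter.b) (List.replicate p.2 Letter.a)


noncomputable def psiQ (k : ℕ) : ℕ → H
  | 0 => 0
  | j+1 => ((-1:ℚ)^(j+1)) •
      concatWH [Letter.a] (shW (Letter.a :: List.replicate k Letter.b) (List.replicate j Letter.a))


lemma fQ_split (k j : ℕ) :
    ((-1:ℚ)^j) • shW (Letter.a :: List.replicate k Letter.b) (List.replicate j Letter.a)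
      = ((-1:ℚ)^j) • concatWH [Letter.a]
          (shW (List.replicate k Letter.b) (List.replicate j Letter.a)) + psiQ k j := by
  cases j with
  | zero => simp [psiQ, shW_nil_right, concatWH_single]
  | succ m =>
      show _ = _ + ((-1:ℚ)^(m+1)) • concatWH [Letter.a]
        (shW (Letter.a :: List.replicate k Letter.b) (List.replicate m Letter.a))
      rw [List.replicate_succ (a := Letter.a), shW_cons, smul_add,
        ← List.replicate_succ (a := Letter.a)]


lemma psiQ_sum_succ (n : ℕ) :
    ∑ p ∈ Finset.HasAntidiagonal.antidiagonal (n+1), psiQ p.1 p.2 = - concatWH [Letter.a] (QQ n) := by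
  rw [Finset.Nat.sum_antidiagonal_succ' (f := fun p => psiQ p.1 p.2),
    show psiQ (n+1) 0 = 0 from rfl, zero_add, QQ, concatWH_sum, ← Finset.sum_neg_distrib]
  refine Finset.sum_congr rfl fun p _ => ?_
  show ((-1:ℚ)^(p.2+1)) • concatWH [Letter.a] (shW _ _) = _
  rw [concatWH_smul, pow_succ, mul_neg_one, neg_smul]


lemma QQ_succ (n : ℕ) :
    QQ (n+1) = concatWH [Letter.a] (PP (n+1)) - concatWH [Letter.a] (QQ n) := by
  rw [QQ,
    Finset.sum_congr rfl (fun p (_ : p ∈ Finset.HasAntidiagonal.antidiagonal (n+1)) => fQ_split p.1 p.2),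
    Finset.sum_add_distrib, psiQ_sum_succ, PP, concatWH_sum, sub_eq_add_neg]
  congr 1
  exact Finset.sum_congr rfl fun p _ => (concatWH_smul _ _ _).symm


lemma QQ_zero : QQ 0 = Finsupp.single [Letter.a] (1:ℚ) := by
  rw [QQ, Finset.Nat.antidiagonal_zero, Finset.sum_singleton]
  simp [shW_nil_right]


lemma concatWH_a_pow (k : ℕ) (g : H) :
    concatWH [Letter.a] (concatWH (List.replicate k Letter.a) g)
      = concatWH (List.replicate (k+1) Letter.a) g := by
  rw [concatWH_concatWH]
  rfl


lemma QQ_closed (m : ℕ) :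
    QQ m = ((-1:ℚ)^m) • Finsupp.single (List.replicate (m+1) Letter.a) (1:ℚ)
      + ∑ t ∈ Finset.range m,
          ((-1:ℚ)^t) • concatWH (List.replicate (t+1) Letter.a) (bmaPow (m - t)) := by
  induction m with
  | zero => simpa using QQ_zero
  | succ n ih =>
      rw [QQ_succ, PP_eq, ih, concatWH_add, concatWH_smul, concatWH_single, concatWH_sum,
        Finset.sum_range_succ' (fun t => ((-1:ℚ)^t) •
          concatWH (List.replicate (t+1) Letter.a) (bmaPow (n + 1 - t))) n]
      have e1 : ([Letter.a] ++ List.replicate (n+1) Letter.a) = List.replicate (n+2) Letter.a := by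
        rw [List.replicate_succ (n := n+1), List.singleton_append]
      rw [e1]
      have e4 : List.replicate (0+1) Letter.a = [Letter.a] := rfl
      simp only [Nat.succ_sub_succ, Nat.sub_zero, pow_zero, one_smul, pow_succ, mul_neg_one,
        neg_smul, concatWH_smul, concatWH_a_pow, Finset.sum_neg_distrib, e4]
      abel


/-- For `r ≥ 2`: `∇(a b^{r-1}) = (-1)^{r+1}·3·a^r + Σ_{j=1}^{r-2} (-1)^{j+1} a^j (b-a)^{r-j}`,
products on the right-hand side being concatenation. -/
theorem statement7 (r : ℕ) (hr : 2 ≤ r) :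
    nablaOp (Letter.a :: List.replicate (r - 1) Letter.b) =
      ((-1 : ℚ) ^ (r + 1) * 3) • Finsupp.single (List.replicate r Letter.a) (1 : ℚ) +
      ∑ j ∈ Finset.Icc 1 (r - 2),
        ((-1 : ℚ) ^ (j + 1)) • concatWH (List.replicate j Letter.a) (bmaPow (r - j)) := by
  obtain ⟨m, rfl⟩ : ∃ m, r = m + 2 := ⟨r - 2, by omega⟩
  have hw1 : m + 2 - 1 = m + 1 := rfl
  have hw2 : m + 2 - 2 = m := rfl
  rw [hw1, hw2, nablaOp]
  have hlen : (Letter.a :: List.replicate (m+1) Letter.b).length = m + 2 := by simp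
  rw [hlen, Finset.sum_range_succ' (fun i => shWH ((Letter.a :: List.replicate (m+1) Letter.b).take i)
        (tauH ((Letter.a :: List.replicate (m+1) Letter.b).drop i))) (m+2)]
  have key : ∀ i ∈ Finset.range (m+2),
      shWH ((Letter.a :: List.replicate (m+1) Letter.b).take (i+1))
        (tauH ((Letter.a :: List.replicate (m+1) Letter.b).drop (i+1)))
      = ((-1:ℚ)^(m+1-i)) • shW (Letter.a :: List.replicate i Letter.b)
          (List.replicate (m+1-i) Letter.a) := by
    intro i hi
    have hi' : i ≤ m + 1 := by
      have := Finset.mem_range.mp hi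
      omega
    rw [List.take_succ_cons, List.drop_succ_cons, List.take_replicate, List.drop_replicate,
      inf_eq_left.mpr hi', tauH_repb, shWH_single]
  rw [Finset.sum_congr rfl key]
  have hQ : QQ (m+1) = ∑ i ∈ Finset.range (m+2), ((-1:ℚ)^(m+1-i)) •
      shW (Letter.a :: List.replicate i Letter.b) (List.replicate (m+1-i) Letter.a) := by
    rw [QQ, Finset.Nat.sum_antidiagonal_eq_sum_range_succ_mk]
  rw [← hQ, List.take_zero, List.drop_zero, shWH_nil, tauH_ab, QQ_closed]
  have hIcc : (∑ j ∈ Finset.Icc 1 m, ((-1:ℚ)^(j+1)) •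
        concatWH (List.replicate j Letter.a) (bmaPow (m+2-j)))
      = ∑ t ∈ Finset.range m, ((-1:ℚ)^t) •
        concatWH (List.replicate (t+1) Letter.a) (bmaPow (m+1-t)) := by
    rw [← Finset.Ico_add_one_right_eq_Icc, Finset.sum_Ico_eq_sum_range]
    have hm : m + 1 - 1 = m := rfl
    rw [hm]
    refine Finset.sum_congr rfl fun t ht => ?_
    have h1 : 1 + t = t + 1 := by omega
    rw [h1]
    have h2 : m + 2 - (t + 1) = m + 1 - t := by omega
    rw [h2]
    congr 1
    rw [show t + 1 + 1 = t + 2 from rfl, pow_succ, pow_succ]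
    ring
  rw [hIcc, Finset.sum_range_succ (fun t => ((-1:ℚ)^t) •
      concatWH (List.replicate (t+1) Letter.a) (bmaPow (m+1-t))) m]
  have hm1 : m + 1 - m = 1 := by omega
  rw [hm1, bmaPow_one, concatWH_sub, concatWH_single, concatWH_single, ← List.replicate_succ']
  simp only [show m+1+1 = m+2 from rfl]
  set X := Finsupp.single (List.replicate (m+2) Letter.a) (1:ℚ) with hX
  set Y := Finsupp.single (List.replicate (m+1) Letter.a ++ [Letter.b]) (1:ℚ) with hY
  set S := ∑ t ∈ Finset.range m, ((-1:ℚ)^t) •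
      concatWH (List.replicate (t+1) Letter.a) (bmaPow (m+1-t)) with hS
  have hc1 : ((-1:ℚ)^(m+1)) = -((-1:ℚ)^m) := by rw [pow_succ]; ring
  have hc3 : ((-1:ℚ)^(m+2+1) * 3) = -((-1:ℚ)^m) * 3 := by rw [pow_succ, pow_succ, pow_succ]; ring
  rw [hc1, hc3]
  module
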